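/- For a function f : ℤ² → ℝ invariant under R, S, T (with R(l,m)=(−l,−m), S(l,m)=(m,l), T(l,m)=(l−m,−m)) and absolutely summable, the sum of f over ℤ² equals 6·(sum over I) − (sum over {m=0}) + f(0,0) + (sum over {l=m}), where I = {(l,m) : l ≥ 1, 0 ≤ m ≤ l−1}. -/

import Mathlib

/-- The order-6 rotation `σ(l,m) = (m, m-l)`. -/
private def sg : ℤ × ℤ → ℤ × ℤ := fun x => (x.2, x.2 - x.1)

private lemma sg_inj : Function.Injective sg := by
  rintro ⟨a, b⟩ ⟨c, d⟩ h
  simp only [sg, Prod.mk.injEq] at h ⊢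
  omega

/-- For `f : ℤ² → ℝ` absolutely summable and invariant under `R`, `S`, `T`, the
sum over `ℤ²` equals `6·(sum over I) − (sum over {m=0}) + f(0,0) + (sum over {l=m})`. -/
theorem sum_decomposition_G3
    (f : ℤ × ℤ → ℝ)
    (habs : Summable fun x : ℤ × ℤ => |f x|)
    (hR : ∀ x : ℤ × ℤ, f (-x.1, -x.2) = f x)
    (hS : ∀ x : ℤ × ℤ, f (x.2, x.1) = f x)
    (hT : ∀ x : ℤ × ℤ, f (x.1 - x.2, -x.2) = f x) :
    ∑' x : ℤ × ℤ, f x =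
      6 * (∑' x : {x : ℤ × ℤ // 1 ≤ x.1 ∧ 0 ≤ x.2 ∧ x.2 ≤ x.1 - 1}, f x.1) -
        (∑' l : ℤ, f (l, 0)) + f (0, 0) + ∑' l : ℤ, f (l, l) := by
  have hf : Summable f := habs.of_abs
  -- invariance under σ
  have key : ∀ l m : ℤ, f (m, m - l) = f (l, m) := by
    intro l m
    have h3 : f (m, m - l) = f (-m, l - m) := by
      have := hR (-m, l - m)
      simpa [neg_sub] using this
    rw [h3, hS (l - m, -m), hT (l, m)]
  have hkey : ∀ x : ℤ × ℤ, f (sg x) = f x := fun x => key x.1 x.2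
  -- the diagonal sum equals the horizontal-axis sum
  have hdiag : ∀ l : ℤ, f (l, l) = f (l, 0) := by
    intro l
    have h1 := hT (l, l)
    have h2 := hR (0, l)
    have h3 := hS (l, 0)
    simp only [sub_self, neg_zero] at h1 h2
    rw [← h1, h2, h3]
  have hdsum : (∑' l : ℤ, f (l, l)) = ∑' l : ℤ, f (l, 0) := tsum_congr hdiag
  -- sums over images under sg
  have himg : ∀ s : Set (ℤ × ℤ), (∑' x : (sg '' s), f x) = ∑' x : s, f x := by
    intro s
    rw [tsum_image f (sg_inj.injOn)]
    exact tsum_congr fun x => hkey x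
  -- the six sectors
  set B0 : Set (ℤ × ℤ) := {x | 1 ≤ x.1 ∧ 0 ≤ x.2 ∧ x.2 ≤ x.1 - 1} with hB0
  set B1 : Set (ℤ × ℤ) := {x | 0 ≤ x.1 ∧ x.2 ≤ -1} with hB1
  set B2 : Set (ℤ × ℤ) := {x | x.1 ≤ -1 ∧ x.2 ≤ -1 ∧ x.2 ≤ x.1} with hB2
  set B3 : Set (ℤ × ℤ) := {x | x.1 ≤ -1 ∧ x.2 ≤ 0 ∧ x.1 + 1 ≤ x.2} with hB3
  set B4 : Set (ℤ × ℤ) := {x | x.1 ≤ 0 ∧ 1 ≤ x.2} with hB4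
  set B5 : Set (ℤ × ℤ) := {x | 1 ≤ x.1 ∧ 1 ≤ x.2 ∧ x.1 ≤ x.2} with hB5
  have im1 : B1 = sg '' B0 := by
    ext ⟨a, b⟩
    simp only [hB0, hB1, Set.mem_image, Set.mem_setOf_eq, sg, Prod.mk.injEq, Prod.exists]
    constructor
    · intro h; exact ⟨a - b, a, by omega⟩
    · rintro ⟨l, m, hm, h1, h2⟩; omega
  have im2 : B2 = sg '' B1 := by
    ext ⟨a, b⟩
    simp only [hB1, hB2, Set.mem_image, Set.mem_setOf_eq, sg, Prod.mk.injEq, Prod.exists]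
    constructor
    · intro h; exact ⟨a - b, a, by omega⟩
    · rintro ⟨l, m, hm, h1, h2⟩; omega
  have im3 : B3 = sg '' B2 := by
    ext ⟨a, b⟩
    simp only [hB2, hB3, Set.mem_image, Set.mem_setOf_eq, sg, Prod.mk.injEq, Prod.exists]
    constructor
    · intro h; exact ⟨a - b, a, by omega⟩
    · rintro ⟨l, m, hm, h1, h2⟩; omega
  have im4 : B4 = sg '' B3 := by
    ext ⟨a, b⟩
    simp only [hB3, hB4, Set.mem_image, Set.mem_setOf_eq, sg, Prod.mk.injEq, Prod.exists]
    constructor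
    · intro h; exact ⟨a - b, a, by omega⟩
    · rintro ⟨l, m, hm, h1, h2⟩; omega
  have im5 : B5 = sg '' B4 := by
    ext ⟨a, b⟩
    simp only [hB4, hB5, Set.mem_image, Set.mem_setOf_eq, sg, Prod.mk.injEq, Prod.exists]
    constructor
    · intro h; exact ⟨a - b, a, by omega⟩
    · rintro ⟨l, m, hm, h1, h2⟩; omega
  -- all six sector sums equal the fundamental one
  have e1 : (∑' x : B1, f x) = ∑' x : B0, f x := by rw [im1]; exact himg B0
  have e2 : (∑' x : B2, f x) = ∑' x : B0, f x := by rw [im2, himg B1]; exact e1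
  have e3 : (∑' x : B3, f x) = ∑' x : B0, f x := by rw [im3, himg B2]; exact e2
  have e4 : (∑' x : B4, f x) = ∑' x : B0, f x := by rw [im4, himg B3]; exact e3
  have e5 : (∑' x : B5, f x) = ∑' x : B0, f x := by rw [im5, himg B4]; exact e4
  -- partition of the plane
  have hU : B0 ∪ (B1 ∪ (B2 ∪ (B3 ∪ (B4 ∪ (B5 ∪ {((0 : ℤ), (0 : ℤ))}))))) = Set.univ := by
    ext ⟨a, b⟩
    simp only [hB0, hB1, hB2, hB3, hB4, hB5, Set.mem_union, Set.mem_setOf_eq,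
      Set.mem_singleton_iff, Set.mem_univ, iff_true, Prod.mk.injEq]
    omega
  have hsub : ∀ s : Set (ℤ × ℤ), Summable (f ∘ ((↑) : s → ℤ × ℤ)) := fun s => hf.subtype s
  have hdisj : ∀ s t : Set (ℤ × ℤ),
      (∀ a b : ℤ, (a, b) ∈ s → (a, b) ∈ t → False) → Disjoint s t := by
    intro s t h
    rw [Set.disjoint_left]
    rintro ⟨a, b⟩ hs ht
    exact h a b hs ht
  have split : ∀ s t : Set (ℤ × ℤ), Disjoint s t →
      (∑' x : ↑(s ∪ t), f x) = (∑' x : s, f x) + ∑' x : t, f x := by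
    intro s t hd
    exact Summable.tsum_union_disjoint hd (hsub s) (hsub t)
  have d5 : Disjoint B5 ({((0 : ℤ), (0 : ℤ))} : Set (ℤ × ℤ)) := by
    apply hdisj; intro a b h1 h2
    simp only [hB5, Set.mem_setOf_eq, Set.mem_singleton_iff, Prod.mk.injEq] at h1 h2
    omega
  have d4 : Disjoint B4 (B5 ∪ {((0 : ℤ), (0 : ℤ))}) := by
    apply hdisj; intro a b h1 h2
    simp only [hB4, hB5, Set.mem_union, Set.mem_setOf_eq, Set.mem_singleton_iff,
      Prod.mk.injEq] at h1 h2
    omega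
  have d3 : Disjoint B3 (B4 ∪ (B5 ∪ {((0 : ℤ), (0 : ℤ))})) := by
    apply hdisj; intro a b h1 h2
    simp only [hB3, hB4, hB5, Set.mem_union, Set.mem_setOf_eq, Set.mem_singleton_iff,
      Prod.mk.injEq] at h1 h2
    omega
  have d2 : Disjoint B2 (B3 ∪ (B4 ∪ (B5 ∪ {((0 : ℤ), (0 : ℤ))}))) := by
    apply hdisj; intro a b h1 h2
    simp only [hB2, hB3, hB4, hB5, Set.mem_union, Set.mem_setOf_eq, Set.mem_singleton_iff,
      Prod.mk.injEq] at h1 h2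
    omega
  have d1 : Disjoint B1 (B2 ∪ (B3 ∪ (B4 ∪ (B5 ∪ {((0 : ℤ), (0 : ℤ))})))) := by
    apply hdisj; intro a b h1 h2
    simp only [hB1, hB2, hB3, hB4, hB5, Set.mem_union, Set.mem_setOf_eq, Set.mem_singleton_iff,
      Prod.mk.injEq] at h1 h2
    omega
  have d0 : Disjoint B0 (B1 ∪ (B2 ∪ (B3 ∪ (B4 ∪ (B5 ∪ {((0 : ℤ), (0 : ℤ))}))))) := by
    apply hdisj; intro a b h1 h2
    simp only [hB0, hB1, hB2, hB3, hB4, hB5, Set.mem_union, Set.mem_setOf_eq,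
      Set.mem_singleton_iff, Prod.mk.injEq] at h1 h2
    omega
  have htotal : (∑' x : ℤ × ℤ, f x) =
      (∑' x : B0, f x) + ((∑' x : B1, f x) + ((∑' x : B2, f x) + ((∑' x : B3, f x) +
        ((∑' x : B4, f x) + ((∑' x : B5, f x) + f (0, 0)))))) := by
    rw [← tsum_univ f, ← hU, split _ _ d0, split _ _ d1, split _ _ d2, split _ _ d3,
      split _ _ d4, split _ _ d5, tsum_singleton ((0 : ℤ), (0 : ℤ)) f]
  -- identify the fundamental-domain sum with the one in the statement
  have hB0sum : (∑' x : {x : ℤ × ℤ // 1 ≤ x.1 ∧ 0 ≤ x.2 ∧ x.2 ≤ x.1 - 1}, f x.1)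
      = ∑' x : B0, f x := rfl
  rw [htotal, hB0sum, hdsum, e1, e2, e3, e4, e5]
  ring
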